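/- Let n ≡ 0 (mod 4), n ≥ 8, and for k ∈ {1,…,n−1}\{n/2} let α_k = (2k−1)π/(2(n−1)) and ξ_k ∈ ℝ^{n−2} be the eigenvector defined by ξ_k = Σ_{i=0}^{n/4−1} U^{4i} τ_k where τ_k = (2cos((n−3)α_k), …, 2cos α_k, 1)ᵀ and U is the upper shift matrix. Then ∏_{k=1, k≠n/2}^{n−1} eᵀξ_k = ±2^{n/2−1}, where e is the all-ones vector. Moreover eᵀξ_k = sin(((n−1)/2)α_k)·sin((n/2)α_k) / (sin(α_k/2)·sin(2α_k)). -/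

import Mathlib

open Matrix

/-- The `(n-2) × (n-2)` upper shift matrix. -/
noncomputable def shiftU (n : ℕ) : Matrix (Fin (n - 2)) (Fin (n - 2)) ℝ :=
  Matrix.of fun i j => if i.val + 1 = j.val then 1 else 0

/-- The angle `α_k = (2k-1)π/(2(n-1))`. -/
noncomputable def alphaAng (n k : ℕ) : ℝ := (2 * (k : ℝ) - 1) * Real.pi / (2 * ((n : ℝ) - 1))

/-- The vector `τ_k = (2cos((n-3)α_k), 2cos((n-4)α_k), …, 2cos α_k, 1)ᵀ`. -/
noncomputable def tauVec (n k : ℕ) : Fin (n - 2) → ℝ :=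
  fun j => if j.val = n - 3 then 1 else 2 * Real.cos (((n - 3 - j.val : ℕ) : ℝ) * alphaAng n k)

/-- The vector `ξ_k = Σ_{i=0}^{n/4-1} U^{4i} τ_k`. -/
noncomputable def xiVec (n k : ℕ) : Fin (n - 2) → ℝ :=
  ∑ i ∈ Finset.range (n / 4), ((shiftU n) ^ (4 * i)) *ᵥ tauVec n k

lemma shiftU_pow (n p : ℕ) (i j : Fin (n - 2)) :
    ((shiftU n) ^ p) i j = if i.val + p = j.val then 1 else 0 := by
  induction p generalizing j with
  | zero => simp [Matrix.one_apply, Fin.ext_iff, eq_comm]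
  | succ p ih =>
    rw [pow_succ, Matrix.mul_apply]
    by_cases h : i.val + (p + 1) = j.val
    · have hlt : i.val + p < n - 2 := by omega
      rw [Finset.sum_eq_single (⟨i.val + p, hlt⟩ : Fin (n - 2))]
      · rw [ih]
        simp [shiftU, h, show i.val + p + 1 = j.val from by omega]
      · intro b _ hb
        rw [ih]
        rcases eq_or_ne (i.val + p) b.val with hb' | hb'
        · exact absurd (Fin.ext hb' : (⟨i.val + p, hlt⟩ : Fin (n-2)) = b).symm hb
        · simp [hb']
      · intro h; exact absurd (Finset.mem_univ _) h
    · rw [if_neg h]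
      apply Finset.sum_eq_zero
      intro b _
      rw [ih, shiftU]
      rcases eq_or_ne (i.val + p) b.val with hb' | hb'
      · have : ¬ (b.val + 1 = j.val) := by omega
        simp [this]
      · simp [hb']

lemma sum_shiftU_mulVec (n p : ℕ) (v : Fin (n - 2) → ℝ) :
    ∑ j, ((shiftU n ^ p) *ᵥ v) j = ∑ j : Fin (n - 2), (if p ≤ j.val then v j else 0) := by
  simp only [Matrix.mulVec, dotProduct, shiftU_pow]
  rw [Finset.sum_comm]
  apply Finset.sum_congr rfl
  intro l _
  by_cases h : p ≤ l.val
  · have hlt : l.val - p < n - 2 := by omega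
    rw [if_pos h, Finset.sum_eq_single (⟨l.val - p, hlt⟩ : Fin (n - 2))]
    · simp [show l.val - p + p = l.val from by omega]
    · intro b _ hb
      rcases eq_or_ne (b.val + p) l.val with hb' | hb'
      · exact absurd (Fin.ext (by simp only [Fin.val_mk]; omega) : b = ⟨l.val - p, hlt⟩) hb
      · simp [hb']
    · intro h; exact absurd (Finset.mem_univ _) h
  · rw [if_neg h]
    apply Finset.sum_eq_zero
    intro b _
    have : ¬ (b.val + p = l.val) := by omega
    simp [this]

noncomputable def tFun (n k : ℕ) : ℕ → ℝ :=
  fun j => if j = n - 3 then 1 else 2 * Real.cos (((n - 3 - j : ℕ) : ℝ) * alphaAng n k)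

lemma ite_sum_Ico (p N : ℕ) (hpN : p ≤ N) (f : ℕ → ℝ) :
    ∑ j ∈ Finset.range N, (if p ≤ j then f j else 0) = ∑ j ∈ Finset.Ico p N, f j := by
  rw [Finset.range_eq_Ico, ← Finset.sum_Ico_consecutive _ (Nat.zero_le p) hpN]
  have h1 : ∑ j ∈ Finset.Ico 0 p, (if p ≤ j then f j else 0) = 0 := by
    apply Finset.sum_eq_zero
    intro j hj
    simp only [Finset.mem_Ico] at hj
    rw [if_neg (by omega)]
  have h2 : ∑ j ∈ Finset.Ico p N, (if p ≤ j then f j else 0) = ∑ j ∈ Finset.Ico p N, f j := by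
    apply Finset.sum_congr rfl
    intro j hj
    simp only [Finset.mem_Ico] at hj
    rw [if_pos hj.1]
  rw [h1, h2, zero_add]

lemma dot_xi (n k : ℕ) (h8 : 8 ≤ n) (h4 : n % 4 = 0) :
    (fun _ => (1 : ℝ)) ⬝ᵥ xiVec n k
      = ∑ i ∈ Finset.range (n / 4), ∑ j ∈ Finset.Ico (4 * i) (n - 2), tFun n k j := by
  have hdot : (fun _ => (1 : ℝ)) ⬝ᵥ xiVec n k = ∑ j, xiVec n k j := by
    simp [dotProduct]
  rw [hdot]
  unfold xiVec
  simp only [Finset.sum_apply]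
  rw [Finset.sum_comm]
  apply Finset.sum_congr rfl
  intro i hi
  simp only [Finset.mem_range] at hi
  rw [sum_shiftU_mulVec]
  have h1 : ∀ j : Fin (n - 2), (if 4 * i ≤ j.val then tauVec n k j else 0)
      = (if 4 * i ≤ j.val then tFun n k j.val else 0) := by
    intro j
    by_cases h : 4 * i ≤ j.val <;> simp [h, tauVec, tFun]
  rw [Finset.sum_congr rfl (fun j _ => h1 j),
    Fin.sum_univ_eq_sum_range (fun jn => if 4 * i ≤ jn then tFun n k jn else 0) (n - 2)]
  exact ite_sum_Ico _ _ (by omega) _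

lemma inner_telescope (n k : ℕ) (h8 : 8 ≤ n) :
    ∀ q, q ≤ n - 3 →
      Real.sin (alphaAng n k / 2) * ∑ j ∈ Finset.Ico (n - 3 - q) (n - 2), tFun n k j
        = Real.sin (((q : ℝ) + 1/2) * alphaAng n k) := by
  intro q
  induction q with
  | zero =>
    intro _
    have h1 : Finset.Ico (n - 3 - 0) (n - 2) = {n - 3} := by
      rw [show n - 2 = (n - 3) + 1 by omega]
      simp
    rw [h1, Finset.sum_singleton]
    simp only [tFun, if_pos rfl]
    norm_num
    congr 1
    ring
  | succ q ih =>
    intro hq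
    have hlt : n - 3 - (q + 1) < n - 2 := by omega
    rw [Finset.sum_eq_sum_Ico_succ_bot hlt, show n - 3 - (q+1) + 1 = n - 3 - q by omega]
    have ht : tFun n k (n - 3 - (q + 1)) = 2 * Real.cos (((q : ℝ) + 1) * alphaAng n k) := by
      unfold tFun
      rw [if_neg (by omega), show n - 3 - (n - 3 - (q + 1)) = q + 1 by omega]
      push_cast
      ring_nf
    rw [mul_add, ht, ih (by omega)]
    set α := alphaAng n k
    have key := Real.sin_sub_sin (((q : ℝ) + 1 + 1/2) * α) (((q : ℝ) + 1/2) * α)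
    have e1 : ((((q : ℝ) + 1 + 1/2) * α) - (((q : ℝ) + 1/2) * α)) / 2 = α / 2 := by ring
    have e2 : ((((q : ℝ) + 1 + 1/2) * α) + (((q : ℝ) + 1/2) * α)) / 2 = ((q : ℝ) + 1) * α := by
      ring
    rw [e1, e2] at key
    push_cast
    linarith [key]

lemma sin_half_pos (n k : ℕ) (h8 : 8 ≤ n) (hk1 : 1 ≤ k) (hk2 : k ≤ n - 1) :
    0 < Real.sin (alphaAng n k / 2) := by
  have hπ := Real.pi_pos
  have hn : (8 : ℝ) ≤ (n : ℝ) := by exact_mod_cast h8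
  have hk1' : (1 : ℝ) ≤ (k : ℝ) := by exact_mod_cast hk1
  have hk2' : (k : ℝ) ≤ (n : ℝ) - 1 := by
    have : (k : ℝ) ≤ ((n - 1 : ℕ) : ℝ) := by exact_mod_cast hk2
    rw [Nat.cast_sub (by omega)] at this
    simpa using this
  apply Real.sin_pos_of_pos_of_lt_pi
  · unfold alphaAng
    exact div_pos (div_pos (by nlinarith) (by nlinarith)) (by norm_num)
  · unfold alphaAng
    rw [div_div]
    rw [div_lt_iff₀ (by nlinarith)]
    nlinarith

lemma sin_two_ne (n k : ℕ) (h8 : 8 ≤ n) (h4 : n % 4 = 0) (hk1 : 1 ≤ k) (hk2 : k ≤ n - 1)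
    (hkn : k ≠ n / 2) : Real.sin (2 * alphaAng n k) ≠ 0 := by
  have hπ := Real.pi_pos
  intro h0
  rw [Real.sin_eq_zero_iff] at h0
  obtain ⟨t, ht⟩ := h0
  unfold alphaAng at ht
  have hne : (n : ℝ) - 1 ≠ 0 := by
    have : (8 : ℝ) ≤ (n : ℝ) := by exact_mod_cast h8
    linarith
  have ht2 : (t : ℝ) * ((n : ℝ) - 1) = 2 * (k : ℝ) - 1 := by
    field_simp at ht
    nlinarith [ht, Real.pi_ne_zero]
  have ht3 : (t : ℤ) * ((n : ℤ) - 1) = 2 * (k : ℤ) - 1 := by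
    exact_mod_cast ht2
  have hk1' : (1 : ℤ) ≤ (k : ℤ) := by exact_mod_cast hk1
  have hk2' : (k : ℤ) ≤ (n : ℤ) - 1 := by
    have : (k : ℤ) ≤ ((n - 1 : ℕ) : ℤ) := by exact_mod_cast hk2
    omega
  have hn' : (8 : ℤ) ≤ (n : ℤ) := by exact_mod_cast h8
  have ht0 : 1 ≤ t := by
    by_contra hc
    push_neg at hc
    have : t ≤ 0 := by omega
    nlinarith
  have ht1 : t ≤ 1 := by
    by_contra hc
    push_neg at hc
    have : 2 ≤ t := by omega
    nlinarith
  have : t = 1 := le_antisymm ht1 ht0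
  subst this
  have hnk : (n : ℤ) = 2 * (k : ℤ) := by linarith
  have : n = 2 * k := by exact_mod_cast hnk
  omega

lemma part1 (n k : ℕ) (h8 : 8 ≤ n) (h4 : n % 4 = 0) (hk1 : 1 ≤ k) (hk2 : k ≤ n - 1)
    (hkn : k ≠ n / 2) :
    (fun _ => (1 : ℝ)) ⬝ᵥ xiVec n k
      = Real.sin (((n : ℝ) - 1) / 2 * alphaAng n k) * Real.sin ((n : ℝ) / 2 * alphaAng n k)
        / (Real.sin (alphaAng n k / 2) * Real.sin (2 * alphaAng n k)) := by
  set α := alphaAng n k with hα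
  have hs1 : Real.sin (α / 2) ≠ 0 := ne_of_gt (sin_half_pos n k h8 hk1 hk2)
  have hs2 : Real.sin (2 * α) ≠ 0 := sin_two_ne n k h8 h4 hk1 hk2 hkn
  have key : Real.sin (α / 2) * Real.sin (2 * α) * ((fun _ => (1 : ℝ)) ⬝ᵥ xiVec n k)
      = Real.sin (((n : ℝ) - 1) / 2 * α) * Real.sin ((n : ℝ) / 2 * α) := by
    rw [dot_xi n k h8 h4]
    have hstep1 : Real.sin (α / 2)
        * ∑ i ∈ Finset.range (n / 4), ∑ j ∈ Finset.Ico (4 * i) (n - 2), tFun n k j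
        = ∑ i ∈ Finset.range (n / 4), Real.sin (((n : ℝ) - 3 - 4 * i + 1/2) * α) := by
      rw [Finset.mul_sum]
      apply Finset.sum_congr rfl
      intro i hi
      simp only [Finset.mem_range] at hi
      have h4i : 4 * i ≤ n - 3 := by omega
      have := inner_telescope n k h8 (n - 3 - 4 * i) (by omega)
      rw [show n - 3 - (n - 3 - 4 * i) = 4 * i by omega] at this
      rw [this]
      congr 1
      have hc : ((n - 3 - 4 * i : ℕ) : ℝ) = (n : ℝ) - 3 - 4 * i := by
        rw [show n - 3 - 4 * i = n - (3 + 4 * i) by omega, Nat.cast_sub (by omega)]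
        push_cast
        ring
      rw [hc]
    have hstep2 : Real.sin (2 * α)
        * ∑ i ∈ Finset.range (n / 4), Real.sin (((n : ℝ) - 3 - 4 * i + 1/2) * α)
        = Real.sin (((n : ℝ) - 1) / 2 * α) * Real.sin ((n : ℝ) / 2 * α) := by
      set g : ℕ → ℝ := fun i => Real.cos (((n : ℝ) - 1/2 - 4 * i) * α) with hg
      have hterm : ∀ i : ℕ,
          Real.sin (2 * α) * Real.sin (((n : ℝ) - 3 - 4 * i + 1/2) * α)
            = (g (i + 1) - g i) / 2 := by
        intro i
        have key2 := Real.cos_sub_cos (((n : ℝ) - 1/2 - 4 * ((i : ℝ) + 1)) * α)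
          (((n : ℝ) - 1/2 - 4 * i) * α)
        have e1 : ((((n : ℝ) - 1/2 - 4 * ((i : ℝ) + 1)) * α) + (((n : ℝ) - 1/2 - 4 * i) * α)) / 2
            = ((n : ℝ) - 3 - 4 * i + 1/2) * α := by ring
        have e2 : ((((n : ℝ) - 1/2 - 4 * ((i : ℝ) + 1)) * α) - (((n : ℝ) - 1/2 - 4 * i) * α)) / 2
            = -(2 * α) := by ring
        rw [e1, e2, Real.sin_neg] at key2
        have hgi : g (i + 1) = Real.cos (((n : ℝ) - 1/2 - 4 * ((i : ℝ) + 1)) * α) := by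
          rw [hg]
          push_cast
          ring_nf
        rw [hgi, hg]
        linarith [key2]
      rw [Finset.mul_sum, Finset.sum_congr rfl (fun i _ => hterm i), ← Finset.sum_div,
        Finset.sum_range_sub g (n / 4)]
      have hg1 : g (n / 4) = Real.cos (α / 2) := by
        have hn4 : ((n / 4 : ℕ) : ℝ) = (n : ℝ) / 4 := by
          have h' : 4 * (n / 4) = n := by omega
          have h'' : ((4 * (n / 4) : ℕ) : ℝ) = (n : ℝ) := by rw [h']
          push_cast at h''
          linarith
        show Real.cos (((n : ℝ) - 1/2 - 4 * ((n / 4 : ℕ) : ℝ)) * α) = Real.cos (α / 2)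
        rw [hn4, show ((n : ℝ) - 1/2 - 4 * ((n : ℝ) / 4)) * α = -(α / 2) by ring, Real.cos_neg]
      have hg0 : g 0 = Real.cos (((n : ℝ) - 1/2) * α) := by
        rw [hg]
        norm_num
      rw [hg1, hg0]
      have key3 := Real.cos_sub_cos (α / 2) (((n : ℝ) - 1/2) * α)
      have e3 : ((α / 2) + ((n : ℝ) - 1/2) * α) / 2 = (n : ℝ) / 2 * α := by ring
      have e4 : ((α / 2) - ((n : ℝ) - 1/2) * α) / 2 = -(((n : ℝ) - 1) / 2 * α) := by ring
      rw [e3, e4, Real.sin_neg] at key3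
      linarith [key3]
    calc Real.sin (α / 2) * Real.sin (2 * α)
          * ∑ i ∈ Finset.range (n / 4), ∑ j ∈ Finset.Ico (4 * i) (n - 2), tFun n k j
        = Real.sin (2 * α) * (Real.sin (α / 2)
            * ∑ i ∈ Finset.range (n / 4), ∑ j ∈ Finset.Ico (4 * i) (n - 2), tFun n k j) := by
          ring
      _ = Real.sin (2 * α)
            * ∑ i ∈ Finset.range (n / 4), Real.sin (((n : ℝ) - 3 - 4 * i + 1/2) * α) := by
          rw [hstep1]
      _ = Real.sin (((n : ℝ) - 1) / 2 * α) * Real.sin ((n : ℝ) / 2 * α) := hstep2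
  rw [eq_div_iff (mul_ne_zero hs1 hs2)]
  linarith [key]

lemma prod_even_odd (f : ℕ → ℂ) (N : ℕ) :
    ∏ j ∈ Finset.range (2 * N), f j
      = (∏ i ∈ Finset.range N, f (2 * i)) * ∏ i ∈ Finset.range N, f (2 * i + 1) := by
  induction N with
  | zero => simp
  | succ N ih =>
    rw [show 2 * (N + 1) = 2 * N + 1 + 1 by ring, Finset.prod_range_succ,
      Finset.prod_range_succ, ih, Finset.prod_range_succ, Finset.prod_range_succ]
    ring

lemma prod_odd_roots (m : ℕ) (hm : 1 ≤ m) (ζ : ℂ) (hζ : IsPrimitiveRoot ζ (4 * m)) :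
    ∏ i ∈ Finset.range (2 * m), (1 - ζ ^ (2 * i + 1)) = 2 := by
  have h1 : ∏ j ∈ Finset.range (4 * m - 1), (1 - ζ ^ (j + 1)) = ((4 * m - 1 : ℕ) : ℂ) + 1 := by
    apply IsPrimitiveRoot.prod_one_sub_pow_eq_order
    rw [show (4 * m - 1) + 1 = 4 * m by omega]; exact hζ
  have hζ2 : IsPrimitiveRoot (ζ ^ 2) (2 * m) := hζ.pow (by omega) (by ring)
  have h2 : ∏ j ∈ Finset.range (2 * m - 1), (1 - (ζ ^ 2) ^ (j + 1))
      = ((2 * m - 1 : ℕ) : ℂ) + 1 := by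
    apply IsPrimitiveRoot.prod_one_sub_pow_eq_order
    rw [show (2 * m - 1) + 1 = 2 * m by omega]; exact hζ2
  have h3 : ∏ j ∈ Finset.range (4 * m - 1), (1 - ζ ^ (j + 1))
      = (∏ j ∈ Finset.range (2 * (2 * m - 1)), (1 - ζ ^ (j + 1))) * (1 - ζ ^ (4 * m - 1)) := by
    rw [show 4 * m - 1 = 2 * (2 * m - 1) + 1 by omega, Finset.prod_range_succ]
  have h4 : ∏ j ∈ Finset.range (2 * (2 * m - 1)), (1 - ζ ^ (j + 1))
      = (∏ i ∈ Finset.range (2 * m - 1), (1 - ζ ^ (2 * i + 1)))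
        * ∏ i ∈ Finset.range (2 * m - 1), (1 - (ζ ^ 2) ^ (i + 1)) := by
    rw [prod_even_odd]
    congr 1
    apply Finset.prod_congr rfl
    intro i _
    rw [← pow_mul]
    congr 2
  have h5 : ∏ i ∈ Finset.range (2 * m), (1 - ζ ^ (2 * i + 1))
      = (∏ i ∈ Finset.range (2 * m - 1), (1 - ζ ^ (2 * i + 1))) * (1 - ζ ^ (4 * m - 1)) := by
    rw [show 2 * m = (2 * m - 1) + 1 by omega, Finset.prod_range_succ]
    congr 3
    omega
  set A := ∏ i ∈ Finset.range (2 * m - 1), (1 - ζ ^ (2 * i + 1)) with hA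
  set B := (1 - ζ ^ (4 * m - 1)) with hB
  have hC : ((2 * m - 1 : ℕ) : ℂ) + 1 = 2 * (m : ℂ) := by
    rw [Nat.cast_sub (by omega)]
    push_cast
    ring
  have hD : ((4 * m - 1 : ℕ) : ℂ) + 1 = 4 * (m : ℂ) := by
    rw [Nat.cast_sub (by omega)]
    push_cast
    ring
  have hcomb : (A * B) * (2 * (m : ℂ)) = 2 * (2 * (m : ℂ)) := by
    rw [← hC]
    have := h1
    rw [h3, h4, h2, hC, hD] at this
    rw [hC]
    linear_combination this
  have hCne : (2 * (m : ℂ)) ≠ 0 := by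
    simp only [ne_eq, mul_eq_zero, Nat.cast_eq_zero]
    push_neg
    exact ⟨two_ne_zero, by omega⟩
  rw [h5]
  exact mul_right_cancel₀ hCne hcomb

lemma Csq (m : ℕ) (hm : 1 ≤ m) :
    (∏ i ∈ Finset.range m, (2 * Real.sin ((2 * (i : ℝ) + 1) * Real.pi / (4 * (m : ℝ))))) ^ 2
      = 2 := by
  have hmR : (m : ℝ) ≠ 0 := Nat.cast_ne_zero.mpr (by omega)
  set ζ : ℂ := Complex.exp (2 * (Real.pi : ℂ) * Complex.I / ((4 * m : ℕ) : ℂ)) with hζdef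
  have hζ : IsPrimitiveRoot ζ (4 * m) := Complex.isPrimitiveRoot_exp (4 * m) (by omega)
  have hexp : ∀ j : ℕ, ζ ^ j
      = Complex.exp ((((j : ℝ) * Real.pi / (2 * (m : ℝ))) : ℝ) * Complex.I) := by
    intro j
    rw [hζdef, ← Complex.exp_nat_mul]
    congr 1
    have hmC : (m : ℂ) ≠ 0 := Nat.cast_ne_zero.mpr (by omega)
    push_cast
    field_simp
    ring
  have hne : ∀ j : ℕ, ζ ^ j ≠ 0 := by
    intro j
    rw [hexp j]
    exact Complex.exp_ne_zero _
  have hconj : ∀ j : ℕ, j ≤ 4 * m → (starRingEnd ℂ) (ζ ^ j) = ζ ^ (4 * m - j) := by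
    intro j hj
    have h1 : ζ ^ j * (starRingEnd ℂ) (ζ ^ j) = 1 := by
      rw [Complex.mul_conj, Complex.normSq_eq_norm_sq, hexp j, Complex.norm_exp_ofReal_mul_I]
      norm_num
    have h2 : ζ ^ j * ζ ^ (4 * m - j) = 1 := by
      rw [← pow_add, show j + (4 * m - j) = 4 * m by omega]
      exact hζ.pow_eq_one
    exact mul_left_cancel₀ (hne j) (h1.trans h2.symm)
  set w := ∏ i ∈ Finset.range m, (1 - ζ ^ (2 * i + 1)) with hw
  have hwconj : (starRingEnd ℂ) w = ∏ i ∈ Finset.range m, (1 - ζ ^ (2 * (m + i) + 1)) := by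
    rw [hw, map_prod, ← Finset.prod_range_reflect (fun i => 1 - ζ ^ (2 * (m + i) + 1)) m]
    apply Finset.prod_congr rfl
    intro i hi
    simp only [Finset.mem_range] at hi
    rw [map_sub, _root_.map_one, hconj (2 * i + 1) (by omega)]
    congr 2
    omega
  have hmul : w * (starRingEnd ℂ) w = 2 := by
    rw [hwconj, hw, ← Finset.prod_range_add (fun i => 1 - ζ ^ (2 * i + 1)) m m,
      show m + m = 2 * m by ring]
    exact prod_odd_roots m hm ζ hζ
  have hnsq : Complex.normSq w = 2 := by
    have h := Complex.mul_conj w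
    rw [hmul] at h
    exact_mod_cast h.symm
  have hfac : ∀ i : ℕ, Complex.normSq (1 - ζ ^ (2 * i + 1))
      = (2 * Real.sin ((2 * (i : ℝ) + 1) * Real.pi / (4 * (m : ℝ)))) ^ 2 := by
    intro i
    rw [hexp (2 * i + 1)]
    set θ : ℝ := (2 * (i : ℝ) + 1) * Real.pi / (4 * (m : ℝ)) with hθ
    have hψ : ((2 * i + 1 : ℕ) : ℝ) * Real.pi / (2 * (m : ℝ)) = 2 * θ := by
      rw [hθ]
      push_cast
      field_simp
      ring
    rw [hψ]
    simp only [Complex.normSq_apply, Complex.sub_re, Complex.one_re,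
      Complex.exp_ofReal_mul_I_re, Complex.sub_im, Complex.one_im,
      Complex.exp_ofReal_mul_I_im]
    nlinarith [Real.sin_sq_add_cos_sq (2 * θ), Real.sin_sq_add_cos_sq θ,
      Real.cos_two_mul θ]
  calc (∏ i ∈ Finset.range m, (2 * Real.sin ((2 * (i : ℝ) + 1) * Real.pi / (4 * (m : ℝ))))) ^ 2
      = ∏ i ∈ Finset.range m,
          (2 * Real.sin ((2 * (i : ℝ) + 1) * Real.pi / (4 * (m : ℝ)))) ^ 2 := by
        rw [Finset.prod_pow]
    _ = ∏ i ∈ Finset.range m, Complex.normSq (1 - ζ ^ (2 * i + 1)) := by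
        exact Finset.prod_congr rfl (fun i _ => (hfac i).symm)
    _ = Complex.normSq w := by rw [hw, map_prod]
    _ = 2 := hnsq

lemma abs_sin_mod (m : ℕ) (hm : 1 ≤ m) (N : ℕ) :
    |Real.sin ((N : ℝ) * Real.pi / (m : ℝ))|
      = |Real.sin (((N % m : ℕ) : ℝ) * Real.pi / (m : ℝ))| := by
  have hmR : (m : ℝ) ≠ 0 := Nat.cast_ne_zero.mpr (by omega)
  have h := Nat.mod_add_div N m
  have hcast : ((N % m : ℕ) : ℝ) + (m : ℝ) * ((N / m : ℕ) : ℝ) = (N : ℝ) := by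
    exact_mod_cast congrArg (Nat.cast (R := ℝ)) h
  have hsplit : (N : ℝ) * Real.pi / (m : ℝ)
      = ((N % m : ℕ) : ℝ) * Real.pi / (m : ℝ) + ((N / m : ℕ) : ℝ) * Real.pi := by
    field_simp
    rw [← hcast]
  rw [hsplit, (Int.cast_natCast (N / m)).symm,
    Real.sin_add_int_mul_pi, abs_mul, zpow_natCast, abs_pow, abs_neg, abs_one,
    one_pow, one_mul]

lemma prod_abs_sin (n : ℕ) [NeZero (n - 1)] (h8 : 8 ≤ n) (h4 : n % 4 = 0) (a : ℕ)
    (ha : Nat.Coprime a (n - 1)) :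
    ∏ k ∈ (Finset.Icc 1 (n - 1)).erase (n / 2),
        |Real.sin (((a * (2 * k - 1) : ℕ) : ℝ) * Real.pi / ((n - 1 : ℕ) : ℝ))|
      = ∏ x ∈ Finset.univ.erase (0 : ZMod (n - 1)),
          |Real.sin (((x.val : ℕ) : ℝ) * Real.pi / ((n - 1 : ℕ) : ℝ))| := by
  set m := n - 1 with hm
  set F : ZMod m → ℝ := fun x => |Real.sin ((x.val : ℝ) * Real.pi / (m : ℝ))| with hF
  have hstep : ∀ N : ℕ, |Real.sin ((N : ℝ) * Real.pi / (m : ℝ))| = F ((N : ZMod m)) := by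
    intro N
    rw [hF]
    simp only
    rw [ZMod.val_natCast]
    exact abs_sin_mod m (by omega) N
  set K := (Finset.Icc 1 (n - 1)).erase (n / 2) with hK
  set g : ℕ → ZMod m := fun k => ((a * (2 * k - 1) : ℕ) : ZMod m) with hg
  have hmemK : ∀ k ∈ K, 1 ≤ k ∧ k ≤ m ∧ k ≠ n / 2 := by
    intro k hk
    rw [hK, Finset.mem_erase, Finset.mem_Icc] at hk
    exact ⟨hk.2.1, hk.2.2, hk.1⟩
  have hunit : IsUnit (a : ZMod m) := by
    rw [← ZMod.coe_unitOfCoprime a ha]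
    exact (ZMod.unitOfCoprime a ha).isUnit
  have hcancel : ∀ x y : ZMod m, (a : ZMod m) * x = (a : ZMod m) * y → x = y :=
    fun x y h => hunit.mul_left_cancel h
  have hinj : ∀ k ∈ K, ∀ k' ∈ K, g k = g k' → k = k' := by
    intro k hk k' hk' hgg
    obtain ⟨hk1, hk2, _⟩ := hmemK k hk
    obtain ⟨hk1', hk2', _⟩ := hmemK k' hk'
    rw [hg] at hgg
    simp only [Nat.cast_mul] at hgg
    have h2 : ((2 * k - 1 : ℕ) : ZMod m) = ((2 * k' - 1 : ℕ) : ZMod m) := hcancel _ _ hgg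
    rw [ZMod.natCast_eq_natCast_iff'] at h2
    have l1 : (2 * k - 1) / m < 2 := Nat.div_lt_of_lt_mul (by omega)
    have l1' : (2 * k' - 1) / m < 2 := Nat.div_lt_of_lt_mul (by omega)
    obtain ⟨q, hql, hqe⟩ : ∃ q, q < 2 ∧ 2 * k - 1 = m * q + (2 * k - 1) % m :=
      ⟨(2 * k - 1) / m, l1, (Nat.div_add_mod _ _).symm⟩
    obtain ⟨q', hql', hqe'⟩ : ∃ q, q < 2 ∧ 2 * k' - 1 = m * q + (2 * k' - 1) % m :=
      ⟨(2 * k' - 1) / m, l1', (Nat.div_add_mod _ _).symm⟩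
    have hmo : m % 2 = 1 := by omega
    interval_cases q <;> interval_cases q' <;> omega
  have hmap : ∀ k ∈ K, g k ∈ Finset.univ.erase (0 : ZMod m) := by
    intro k hk
    obtain ⟨hk1, hk2, hk3⟩ := hmemK k hk
    simp only [Finset.mem_erase, Finset.mem_univ, and_true]
    intro h0
    rw [hg] at h0
    simp only [Nat.cast_mul] at h0
    have hz : ((2 * k - 1 : ℕ) : ZMod m) = 0 :=
      hcancel _ 0 (by rw [mul_zero]; exact h0)
    rw [ZMod.natCast_eq_zero_iff] at hz
    obtain ⟨c, hc⟩ := hz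
    have hc1 : c ≠ 0 := by rintro rfl; omega
    have hc2 : c < 2 := by
      by_contra hcc
      push_neg at hcc
      have := Nat.mul_le_mul_left m hcc
      omega
    have hc3 : c = 1 := by omega
    subst hc3
    omega
  have himg : K.image g = Finset.univ.erase (0 : ZMod m) := by
    apply Finset.eq_of_subset_of_card_le
    · intro x hx
      obtain ⟨k, hk, rfl⟩ := Finset.mem_image.mp hx
      exact hmap k hk
    · rw [Finset.card_image_of_injOn hinj]
      have hcK : K.card = m - 1 := by
        rw [hK, Finset.card_erase_of_mem, Nat.card_Icc]
        · omega
        · simp only [Finset.mem_Icc]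
          omega
      have hcE : (Finset.univ.erase (0 : ZMod m)).card = m - 1 := by
        rw [Finset.card_erase_of_mem (Finset.mem_univ _), Finset.card_univ, ZMod.card]
      omega
  calc ∏ k ∈ K, |Real.sin (((a * (2 * k - 1) : ℕ) : ℝ) * Real.pi / ((m : ℕ) : ℝ))|
      = ∏ k ∈ K, F (g k) := Finset.prod_congr rfl (fun k _ => hstep _)
    _ = ∏ x ∈ K.image g, F x := (Finset.prod_image hinj).symm
    _ = ∏ x ∈ Finset.univ.erase (0 : ZMod m), F x := by rw [himg]

lemma abs_A (k : ℕ) (hk1 : 1 ≤ k) :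
    |Real.sin (((2 * k - 1 : ℕ) : ℝ) * Real.pi / 4)| = Real.sqrt 2 / 2 := by
  set x := ((2 * k - 1 : ℕ) : ℝ) * Real.pi / 4 with hx
  have hcast : ((2 * k - 1 : ℕ) : ℝ) = 2 * (k : ℝ) - 1 := by
    rw [Nat.cast_sub (by omega)]; push_cast; ring
  have h2x : 2 * x = (k : ℝ) * Real.pi - Real.pi / 2 := by rw [hx, hcast]; ring
  have hcos : Real.cos (2 * x) = 0 := by
    rw [h2x, Real.cos_sub, Real.cos_pi_div_two, Real.sin_pi_div_two, Real.sin_nat_mul_pi]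
    simp
  have hsq : |Real.sin x| ^ 2 = 1 / 2 := by
    rw [sq_abs]
    nlinarith [Real.sin_sq_add_cos_sq x, Real.cos_two_mul x]
  rw [← Real.sqrt_sq (abs_nonneg (Real.sin x)), hsq,
    show (1 / 2 : ℝ) = (Real.sqrt 2 / 2) ^ 2 by
      rw [div_pow, Real.sq_sqrt] <;> norm_num,
    Real.sqrt_sq (by positivity)]

theorem stmt18 (n : ℕ) (h4 : n % 4 = 0) (h8 : 8 ≤ n) :
    (∀ k ∈ (Finset.Icc 1 (n - 1)).erase (n / 2),
        (fun _ => (1 : ℝ)) ⬝ᵥ xiVec n k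
          = Real.sin (((n : ℝ) - 1) / 2 * alphaAng n k) * Real.sin ((n : ℝ) / 2 * alphaAng n k)
            / (Real.sin (alphaAng n k / 2) * Real.sin (2 * alphaAng n k)))
    ∧ |∏ k ∈ (Finset.Icc 1 (n - 1)).erase (n / 2), (fun _ => (1 : ℝ)) ⬝ᵥ xiVec n k|
        = 2 ^ (n / 2 - 1) := by
  haveI : NeZero (n - 1) := ⟨by omega⟩
  have hmem : ∀ k ∈ (Finset.Icc 1 (n - 1)).erase (n / 2), 1 ≤ k ∧ k ≤ n - 1 ∧ k ≠ n / 2 := by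
    intro k hk
    rw [Finset.mem_erase, Finset.mem_Icc] at hk
    exact ⟨hk.2.1, hk.2.2, hk.1⟩
  have hpart1 : ∀ k ∈ (Finset.Icc 1 (n - 1)).erase (n / 2),
      (fun _ => (1 : ℝ)) ⬝ᵥ xiVec n k
        = Real.sin (((n : ℝ) - 1) / 2 * alphaAng n k) * Real.sin ((n : ℝ) / 2 * alphaAng n k)
          / (Real.sin (alphaAng n k / 2) * Real.sin (2 * alphaAng n k)) := fun k hk =>
    part1 n k h8 h4 (hmem k hk).1 (hmem k hk).2.1 (hmem k hk).2.2
  refine ⟨hpart1, ?_⟩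
  have hnR : (8 : ℝ) ≤ (n : ℝ) := by exact_mod_cast h8
  have hn1 : ((n : ℝ)) - 1 ≠ 0 := by linarith
  have hcastm : ((n - 1 : ℕ) : ℝ) = (n : ℝ) - 1 := by
    rw [Nat.cast_sub (by omega), Nat.cast_one]
  have hcastk : ∀ k : ℕ, 1 ≤ k → ((2 * k - 1 : ℕ) : ℝ) = 2 * (k : ℝ) - 1 := by
    intro k hk; rw [Nat.cast_sub (by omega)]; push_cast; ring
  have hn4cast : ((n / 4 : ℕ) : ℝ) = (n : ℝ) / 4 := by
    have h' : 4 * (n / 4) = n := by omega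
    have h'' : ((4 * (n / 4) : ℕ) : ℝ) = (n : ℝ) := by rw [h']
    push_cast at h''
    linarith
  have hn2cast : ((n / 2 : ℕ) : ℝ) = (n : ℝ) / 2 := by
    have h' : 2 * (n / 2) = n := by omega
    have h'' : ((2 * (n / 2) : ℕ) : ℝ) = (n : ℝ) := by rw [h']
    push_cast at h''
    linarith
  set K := (Finset.Icc 1 (n - 1)).erase (n / 2) with hK
  have hn2mem : n / 2 ∈ Finset.Icc 1 (n - 1) := by
    rw [Finset.mem_Icc]; omega
  have hcardK : K.card = n - 2 := by
    rw [hK, Finset.card_erase_of_mem hn2mem, Nat.card_Icc]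
    omega
  rw [Finset.prod_congr rfl hpart1, Finset.abs_prod]
  have hsplit : ∀ k ∈ K,
      |Real.sin (((n : ℝ) - 1) / 2 * alphaAng n k) * Real.sin ((n : ℝ) / 2 * alphaAng n k)
        / (Real.sin (alphaAng n k / 2) * Real.sin (2 * alphaAng n k))|
      = |Real.sin (((n : ℝ) - 1) / 2 * alphaAng n k)| * |Real.sin ((n : ℝ) / 2 * alphaAng n k)|
        / (|Real.sin (alphaAng n k / 2)| * |Real.sin (2 * alphaAng n k)|) := by
    intro k _
    rw [abs_div, abs_mul, abs_mul]
  rw [Finset.prod_congr rfl hsplit, Finset.prod_div_distrib, Finset.prod_mul_distrib,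
    Finset.prod_mul_distrib]
  -- A product
  have hAk : ∀ k ∈ K, |Real.sin (((n : ℝ) - 1) / 2 * alphaAng n k)| = Real.sqrt 2 / 2 := by
    intro k hk
    obtain ⟨hk1, hk2, hk3⟩ := hmem k hk
    rw [show ((n : ℝ) - 1) / 2 * alphaAng n k = ((2 * k - 1 : ℕ) : ℝ) * Real.pi / 4 by
      unfold alphaAng
      rw [hcastk k hk1]
      field_simp
      ring]
    exact abs_A k hk1
  have hA : ∏ k ∈ K, |Real.sin (((n : ℝ) - 1) / 2 * alphaAng n k)|
      = (Real.sqrt 2 / 2) ^ (n - 2) := by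
    rw [Finset.prod_congr rfl hAk, Finset.prod_const, hcardK]
  -- B product
  have hcop : Nat.Coprime (n / 4) (n - 1) := by
    have h1 : Nat.gcd (n / 4) (n - 1) ∣ n / 4 := Nat.gcd_dvd_left _ _
    have h2 : Nat.gcd (n / 4) (n - 1) ∣ n - 1 := Nat.gcd_dvd_right _ _
    have h3 : Nat.gcd (n / 4) (n - 1) ∣ n := h1.trans (Nat.div_dvd_of_dvd (by omega))
    have h5 := Nat.dvd_sub h3 h2
    rw [show n - (n - 1) = 1 by omega] at h5
    exact Nat.dvd_one.mp h5
  have hBk : ∀ k ∈ K, |Real.sin ((n : ℝ) / 2 * alphaAng n k)|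
      = |Real.sin (((n / 4 * (2 * k - 1) : ℕ) : ℝ) * Real.pi / ((n - 1 : ℕ) : ℝ))| := by
    intro k hk
    obtain ⟨hk1, _, _⟩ := hmem k hk
    congr 1
    rw [Nat.cast_mul, hcastk k hk1, hcastm, hn4cast]
    unfold alphaAng
    field_simp
    ring
  have hB := prod_abs_sin n h8 h4 (n / 4) hcop
  rw [← hK] at hB
  -- D product
  have hDk : ∀ k ∈ K, |Real.sin (2 * alphaAng n k)|
      = |Real.sin (((1 * (2 * k - 1) : ℕ) : ℝ) * Real.pi / ((n - 1 : ℕ) : ℝ))| := by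
    intro k hk
    obtain ⟨hk1, _, _⟩ := hmem k hk
    congr 1
    rw [Nat.cast_mul, hcastk k hk1, hcastm, Nat.cast_one, one_mul]
    unfold alphaAng
    congr 1
    field_simp
  have hD := prod_abs_sin n h8 h4 1 (Nat.coprime_one_left _)
  rw [← hK] at hD
  set R := ∏ x ∈ Finset.univ.erase (0 : ZMod (n - 1)),
      |Real.sin (((x.val : ℕ) : ℝ) * Real.pi / ((n - 1 : ℕ) : ℝ))| with hR
  have hDprod : ∏ k ∈ K, |Real.sin (2 * alphaAng n k)| = R := by
    rw [Finset.prod_congr rfl hDk, hD]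
  have hBprod : ∏ k ∈ K, |Real.sin ((n : ℝ) / 2 * alphaAng n k)| = R := by
    rw [Finset.prod_congr rfl hBk, hB]
  have hRne : R ≠ 0 := by
    rw [← hDprod]
    apply Finset.prod_ne_zero_iff.mpr
    intro k hk
    obtain ⟨hk1, hk2, hk3⟩ := hmem k hk
    exact abs_ne_zero.mpr (sin_two_ne n k h8 h4 hk1 hk2 hk3)
  -- C product
  have hCk_pos : ∀ k ∈ K, 0 < Real.sin (alphaAng n k / 2) := fun k hk =>
    sin_half_pos n k h8 (hmem k hk).1 (hmem k hk).2.1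
  have hCabs : ∀ k ∈ K, |Real.sin (alphaAng n k / 2)| = Real.sin (alphaAng n k / 2) :=
    fun k hk => abs_of_pos (hCk_pos k hk)
  have hQ := Csq (n - 1) (by omega)
  have hIcc : ∏ k ∈ Finset.Icc 1 (n - 1), (2 * Real.sin (alphaAng n k / 2))
      = ∏ i ∈ Finset.range (n - 1),
          (2 * Real.sin ((2 * (i : ℝ) + 1) * Real.pi / (4 * ((n - 1 : ℕ) : ℝ)))) := by
    rw [show Finset.Icc 1 (n - 1) = Finset.Ico 1 (n - 1 + 1) by rw [Finset.Ico_add_one_right_eq_Icc],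
      Finset.prod_Ico_eq_prod_range]
    simp only [Nat.add_sub_cancel]
    apply Finset.prod_congr rfl
    intro i _
    congr 1
    unfold alphaAng
    rw [hcastm]
    push_cast
    field_simp
    ring
  have huval : 2 * Real.sin (alphaAng n (n / 2) / 2) = Real.sqrt 2 := by
    rw [show alphaAng n (n / 2) / 2 = Real.pi / 4 by
      unfold alphaAng
      rw [hn2cast]
      field_simp
      ring]
    rw [Real.sin_pi_div_four]
    ring
  have hKu_pos : 0 < ∏ k ∈ K, (2 * Real.sin (alphaAng n k / 2)) :=
    Finset.prod_pos (fun k hk => mul_pos two_pos (hCk_pos k hk))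
  have hKu1 : ∏ k ∈ K, (2 * Real.sin (alphaAng n k / 2)) = 1 := by
    have hsplit2 : ∏ k ∈ Finset.Icc 1 (n - 1), (2 * Real.sin (alphaAng n k / 2))
        = (∏ k ∈ K, (2 * Real.sin (alphaAng n k / 2)))
          * (2 * Real.sin (alphaAng n (n / 2) / 2)) := by
      rw [hK]
      exact (Finset.prod_erase_mul _ _ hn2mem).symm
    have hsq2 : (∏ k ∈ K, (2 * Real.sin (alphaAng n k / 2))) ^ 2 * 2 = 2 := by
      have h0 : (∏ k ∈ Finset.Icc 1 (n - 1), (2 * Real.sin (alphaAng n k / 2))) ^ 2 = 2 := by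
        rw [hIcc]; exact hQ
      rw [hsplit2, mul_pow, huval, Real.sq_sqrt (by norm_num : (0:ℝ) ≤ 2)] at h0
      exact h0
    have hsq1 : (∏ k ∈ K, (2 * Real.sin (alphaAng n k / 2))) ^ 2 = 1 := by linarith
    have habs1 : |∏ k ∈ K, (2 * Real.sin (alphaAng n k / 2))| = 1 := by
      rw [← Real.sqrt_sq_eq_abs, hsq1, Real.sqrt_one]
    rw [abs_of_pos hKu_pos] at habs1
    exact habs1
  have hC : ∏ k ∈ K, Real.sin (alphaAng n k / 2) = ((2 : ℝ) ^ (n - 2))⁻¹ := by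
    have h2 : ∏ k ∈ K, (2 * Real.sin (alphaAng n k / 2))
        = 2 ^ (n - 2) * ∏ k ∈ K, Real.sin (alphaAng n k / 2) := by
      rw [Finset.prod_mul_distrib, Finset.prod_const, hcardK]
    rw [h2] at hKu1
    field_simp at hKu1 ⊢
    linarith
  have hCprod : ∏ k ∈ K, |Real.sin (alphaAng n k / 2)| = ((2 : ℝ) ^ (n - 2))⁻¹ := by
    rw [Finset.prod_congr rfl hCabs, hC]
  rw [hA, hBprod, hCprod, hDprod]
  have hfinal : (Real.sqrt 2 / 2) ^ (n - 2) * (2 : ℝ) ^ (n - 2) = 2 ^ (n / 2 - 1) := by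
    rw [← mul_pow, show Real.sqrt 2 / 2 * 2 = Real.sqrt 2 by ring,
      show n - 2 = 2 * (n / 2 - 1) by omega, pow_mul, Real.sq_sqrt (by norm_num : (0:ℝ) ≤ 2)]
  rw [div_eq_iff (mul_ne_zero (inv_ne_zero (pow_ne_zero _ two_ne_zero)) hRne)]
  calc (Real.sqrt 2 / 2) ^ (n - 2) * R
      = ((Real.sqrt 2 / 2) ^ (n - 2) * (2 : ℝ) ^ (n - 2)) * (((2 : ℝ) ^ (n - 2))⁻¹ * R) := by
        field_simp
    _ = 2 ^ (n / 2 - 1) * (((2 : ℝ) ^ (n - 2))⁻¹ * R) := by rw [hfinal]
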